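/- Let a ≤ b be positive integers and k ≥ 2 with a + b > k and ⌊k/2⌋ < a < ⌈(3k−2)/2⌉. Then the k-rainbow total domination number of K_{a,b} equals a + ⌈(k+1)/2⌉. -/

import Mathlib

open SimpleGraph Finset

/-- `f` is a `k`-rainbow dominating function of `G`: every vertex with empty label
sees all colors of `Fin k` among its neighbors' labels. -/
def IsKRDF {V : Type*} (G : SimpleGraph V) (k : ℕ) (f : V → Finset (Fin k)) : Prop :=
  ∀ v, f v = ∅ → ∀ i : Fin k, ∃ u, G.Adj v u ∧ i ∈ f u

/-- `f` is a `k`-rainbow total dominating function of `G`: a `k`RDF such that every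
vertex labeled by a singleton `{i}` has a neighbor whose label contains `i`. -/
def IsKRTDF {V : Type*} (G : SimpleGraph V) (k : ℕ) (f : V → Finset (Fin k)) : Prop :=
  IsKRDF G k f ∧ ∀ v (i : Fin k), f v = {i} → ∃ u, G.Adj v u ∧ i ∈ f u

/-- The `k`-rainbow domination number of `G`. -/
noncomputable def rdnum {V : Type*} [Fintype V] (G : SimpleGraph V) (k : ℕ) : ℕ :=
  sInf {n | ∃ f : V → Finset (Fin k), IsKRDF G k f ∧ ∑ v, (f v).card = n}

/-- The `k`-rainbow total domination number of `G`. -/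
noncomputable def rtdnum {V : Type*} [Fintype V] (G : SimpleGraph V) (k : ℕ) : ℕ :=
  sInf {n | ∃ f : V → Finset (Fin k), IsKRTDF G k f ∧ ∑ v, (f v).card = n}

/-- The domination number of `G`. -/
noncomputable def domnum {V : Type*} [Fintype V] (G : SimpleGraph V) : ℕ :=
  sInf {n | ∃ D : Finset V, (∀ v ∉ D, ∃ u ∈ D, G.Adj u v) ∧ D.card = n}

/-- The total domination number of `G`. -/
noncomputable def totdomnum {V : Type*} [Fintype V] (G : SimpleGraph V) : ℕ :=
  sInf {n | ∃ D : Finset V, (∀ v, ∃ u ∈ D, G.Adj u v) ∧ D.card = n}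



lemma cover_le_sum {k : ℕ} {α : Type*} [Fintype α] (g : α → Finset (Fin k))
    (h : ∀ i, ∃ x, i ∈ g x) : k ≤ ∑ x, (g x).card := by
  classical
  have hsub : (univ : Finset (Fin k)) ⊆ univ.biUnion g := fun i _ =>
    Finset.mem_biUnion.mpr ⟨(h i).choose, mem_univ _, (h i).choose_spec⟩
  calc k = (univ : Finset (Fin k)).card := by simp
    _ ≤ (univ.biUnion g).card := Finset.card_le_card hsub
    _ ≤ ∑ x, (g x).card := Finset.card_biUnion_le

lemma cover_le_sum2 {k : ℕ} {α β : Type*} [Fintype α] [Fintype β]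
    (g : α → Finset (Fin k)) (h : β → Finset (Fin k))
    (cov : ∀ i, (∃ x, i ∈ g x) ∨ ∃ y, i ∈ h y) :
    k ≤ (∑ x, (g x).card) + ∑ y, (h y).card := by
  classical
  have := cover_le_sum (Sum.elim g h) (fun i => by
    rcases cov i with ⟨x, hx⟩ | ⟨y, hy⟩
    · exact ⟨Sum.inl x, hx⟩
    · exact ⟨Sum.inr y, hy⟩)
  rwa [Fintype.sum_sum_type] at this

lemma lower_bound {a b k : ℕ} (ha : 1 ≤ a) (hab : a ≤ b) (hk : 2 ≤ k)
    (h1 : k / 2 < a) (h2 : a < (3 * k - 1) / 2)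
    (f : Fin a ⊕ Fin b → Finset (Fin k))
    (hf : IsKRTDF (completeBipartiteGraph (Fin a) (Fin b)) k f) :
    a + (k + 2) / 2 ≤ ∑ v, (f v).card := by
  classical
  obtain ⟨hrdf, htot⟩ := hf
  rw [Fintype.sum_sum_type]
  set wA := ∑ j : Fin a, (f (Sum.inl j)).card with hwAdef
  set wB := ∑ j : Fin b, (f (Sum.inr j)).card with hwBdef
  have adjL : ∀ (j : Fin a) (u), (completeBipartiteGraph (Fin a) (Fin b)).Adj (Sum.inl j) u →
      ∃ j', u = Sum.inr j' := by
    intro j u hu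
    match u with
    | Sum.inl x => simp at hu
    | Sum.inr x => exact ⟨x, rfl⟩
  have adjR : ∀ (j : Fin b) (u), (completeBipartiteGraph (Fin a) (Fin b)).Adj (Sum.inr j) u →
      ∃ j', u = Sum.inl j' := by
    intro j u hu
    match u with
    | Sum.inl x => exact ⟨x, rfl⟩
    | Sum.inr x => simp at hu
  have singR : ∀ (j : Fin b) (i : Fin k), f (Sum.inr j) = {i} → ∃ j', i ∈ f (Sum.inl j') := by
    intro j i hji
    obtain ⟨u, hu, hiu⟩ := htot _ i hji
    obtain ⟨j', rfl⟩ := adjR j u hu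
    exact ⟨j', hiu⟩
  have singL : ∀ (j : Fin a) (i : Fin k), f (Sum.inl j) = {i} → ∃ j', i ∈ f (Sum.inr j') := by
    intro j i hji
    obtain ⟨u, hu, hiu⟩ := htot _ i hji
    obtain ⟨j', rfl⟩ := adjL j u hu
    exact ⟨j', hiu⟩
  by_cases hA : ∃ j, f (Sum.inl j) = ∅
  · have covB : ∀ i : Fin k, ∃ j, i ∈ f (Sum.inr j) := by
      intro i
      obtain ⟨j0, hj0⟩ := hA
      obtain ⟨u, hu, hiu⟩ := hrdf _ hj0 i
      obtain ⟨j, rfl⟩ := adjL j0 u hu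
      exact ⟨j, hiu⟩
    by_cases hB : ∃ j, f (Sum.inr j) = ∅
    · have covA : ∀ i : Fin k, ∃ j, i ∈ f (Sum.inl j) := by
        intro i
        obtain ⟨j0, hj0⟩ := hB
        obtain ⟨u, hu, hiu⟩ := hrdf _ hj0 i
        obtain ⟨j, rfl⟩ := adjR j0 u hu
        exact ⟨j, hiu⟩
      have h3 : k ≤ wA := cover_le_sum _ covA
      have h4 : k ≤ wB := cover_le_sum _ covB
      omega
    · push_neg at hB
      have hB1 : ∀ j, 1 ≤ (f (Sum.inr j)).card := fun j =>
        Finset.card_pos.mpr (hB j)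
      have hwB : wB = (∑ j : Fin b, ((f (Sum.inr j)).card - 1)) + b := by
        calc wB = ∑ j : Fin b, (((f (Sum.inr j)).card - 1) + 1) :=
              Finset.sum_congr rfl (fun j _ => by have := hB1 j; omega)
          _ = (∑ j : Fin b, ((f (Sum.inr j)).card - 1)) + ∑ _j : Fin b, 1 :=
              Finset.sum_add_distrib
          _ = (∑ j : Fin b, ((f (Sum.inr j)).card - 1)) + b := by simp
      by_cases hwA : wA = 0
      · have hAall : ∀ j, f (Sum.inl j) = ∅ := by
          intro j
          have : (f (Sum.inl j)).card = 0 :=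
            (Finset.sum_eq_zero_iff).mp (hwAdef ▸ hwA) j (mem_univ j)
          exact Finset.card_eq_zero.mp this
        have hB2 : ∀ j, 2 ≤ (f (Sum.inr j)).card := by
          intro j
          rcases Nat.lt_or_ge (f (Sum.inr j)).card 2 with hc | hc
          · exfalso
            have hc1 : (f (Sum.inr j)).card = 1 := by have := hB1 j; omega
            obtain ⟨i, hi⟩ := Finset.card_eq_one.mp hc1
            obtain ⟨j', hj'⟩ := singR j i hi
            rw [hAall j'] at hj'
            simp at hj'
          · exact hc
        have h5 : ∑ _j : Fin b, 2 ≤ wB := Finset.sum_le_sum (fun j _ => hB2 j)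
        simp only [Finset.sum_const, Finset.card_univ, Fintype.card_fin, smul_eq_mul] at h5
        omega
      · have hcov2 : ∀ i : Fin k, (∃ x : Fin a, i ∈ f (Sum.inl x)) ∨
            (∃ y : Fin b, i ∈ (if 2 ≤ (f (Sum.inr y)).card then f (Sum.inr y) else ∅)) := by
          intro i
          obtain ⟨j, hj⟩ := covB i
          by_cases hc : 2 ≤ (f (Sum.inr j)).card
          · exact Or.inr ⟨j, by rw [if_pos hc]; exact hj⟩
          · left
            have hc1 : (f (Sum.inr j)).card = 1 := by have := hB1 j; omega
            obtain ⟨i', hi'⟩ := Finset.card_eq_one.mp hc1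
            have hii : i' = i := by rw [hi'] at hj; exact (Finset.mem_singleton.mp hj).symm
            subst hii
            exact singR j i' hi'
        have h5 := cover_le_sum2 _ _ hcov2
        have h6 : ∑ y : Fin b, (if 2 ≤ (f (Sum.inr y)).card then f (Sum.inr y) else ∅).card ≤
            ∑ y : Fin b, 2 * ((f (Sum.inr y)).card - 1) := by
          apply Finset.sum_le_sum
          intro y _
          by_cases hc : 2 ≤ (f (Sum.inr y)).card
          · rw [if_pos hc]; omega
          · rw [if_neg hc]; simp
        have h7 : ∑ y : Fin b, 2 * ((f (Sum.inr y)).card - 1) =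
            2 * ∑ y : Fin b, ((f (Sum.inr y)).card - 1) := (Finset.mul_sum _ _ _).symm
        omega
  · push_neg at hA
    have hA1 : ∀ j, 1 ≤ (f (Sum.inl j)).card := fun j =>
      Finset.card_pos.mpr (hA j)
    have hwA : wA = (∑ j : Fin a, ((f (Sum.inl j)).card - 1)) + a := by
      calc wA = ∑ j : Fin a, (((f (Sum.inl j)).card - 1) + 1) :=
            Finset.sum_congr rfl (fun j _ => by have := hA1 j; omega)
        _ = (∑ j : Fin a, ((f (Sum.inl j)).card - 1)) + ∑ _j : Fin a, 1 :=
            Finset.sum_add_distrib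
        _ = (∑ j : Fin a, ((f (Sum.inl j)).card - 1)) + a := by simp
    by_cases hB : ∃ j, f (Sum.inr j) = ∅
    · have covA : ∀ i : Fin k, ∃ j, i ∈ f (Sum.inl j) := by
        intro i
        obtain ⟨j0, hj0⟩ := hB
        obtain ⟨u, hu, hiu⟩ := hrdf _ hj0 i
        obtain ⟨j, rfl⟩ := adjR j0 u hu
        exact ⟨j, hiu⟩
      by_cases hwBz : wB = 0
      · have hBall : ∀ j, f (Sum.inr j) = ∅ := by
          intro j
          have : (f (Sum.inr j)).card = 0 :=
            (Finset.sum_eq_zero_iff).mp (hwBdef ▸ hwBz) j (mem_univ j)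
          exact Finset.card_eq_zero.mp this
        have hA2 : ∀ j, 2 ≤ (f (Sum.inl j)).card := by
          intro j
          rcases Nat.lt_or_ge (f (Sum.inl j)).card 2 with hc | hc
          · exfalso
            have hc1 : (f (Sum.inl j)).card = 1 := by have := hA1 j; omega
            obtain ⟨i, hi⟩ := Finset.card_eq_one.mp hc1
            obtain ⟨j', hj'⟩ := singL j i hi
            rw [hBall j'] at hj'
            simp at hj'
          · exact hc
        have h5 : ∑ _j : Fin a, 2 ≤ wA := Finset.sum_le_sum (fun j _ => hA2 j)
        simp only [Finset.sum_const, Finset.card_univ, Fintype.card_fin, smul_eq_mul] at h5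
        omega
      · have hcov2 : ∀ i : Fin k,
            (∃ x : Fin a, i ∈ (if 2 ≤ (f (Sum.inl x)).card then f (Sum.inl x) else ∅)) ∨
            (∃ y : Fin b, i ∈ f (Sum.inr y)) := by
          intro i
          obtain ⟨j, hj⟩ := covA i
          by_cases hc : 2 ≤ (f (Sum.inl j)).card
          · exact Or.inl ⟨j, by rw [if_pos hc]; exact hj⟩
          · right
            have hc1 : (f (Sum.inl j)).card = 1 := by have := hA1 j; omega
            obtain ⟨i', hi'⟩ := Finset.card_eq_one.mp hc1
            have hii : i' = i := by rw [hi'] at hj; exact (Finset.mem_singleton.mp hj).symm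
            subst hii
            exact singL j i' hi'
        have h5 := cover_le_sum2 _ _ hcov2
        have h6 : ∑ x : Fin a, (if 2 ≤ (f (Sum.inl x)).card then f (Sum.inl x) else ∅).card ≤
            ∑ x : Fin a, 2 * ((f (Sum.inl x)).card - 1) := by
          apply Finset.sum_le_sum
          intro x _
          by_cases hc : 2 ≤ (f (Sum.inl x)).card
          · rw [if_pos hc]; omega
          · rw [if_neg hc]; simp
        have h7 : ∑ x : Fin a, 2 * ((f (Sum.inl x)).card - 1) =
            2 * ∑ x : Fin a, ((f (Sum.inl x)).card - 1) := (Finset.mul_sum _ _ _).symm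
        omega
    · push_neg at hB
      have hB1 : ∀ j, 1 ≤ (f (Sum.inr j)).card := fun j =>
        Finset.card_pos.mpr (hB j)
      have h5 : ∑ _j : Fin a, 1 ≤ wA := Finset.sum_le_sum (fun j _ => hA1 j)
      have h6 : ∑ _j : Fin b, 1 ≤ wB := Finset.sum_le_sum (fun j _ => hB1 j)
      simp only [Finset.sum_const, Finset.card_univ, Fintype.card_fin, smul_eq_mul] at h5 h6
      omega


def ubf (a b k : ℕ) : Fin a ⊕ Fin b → Finset (Fin k) :=
  Sum.elim
    (fun j => if h : (j : ℕ) < k / 2 ∧ 2 * (j : ℕ) + 1 < k then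
        {⟨2 * j, by omega⟩, ⟨2 * j + 1, h.2⟩}
      else if h2 : k - 1 < k then {⟨k - 1, h2⟩} else ∅)
    (fun j => if h2 : (j : ℕ) = 0 ∧ k - 1 < k then {⟨k - 1, h2.2⟩} else ∅)

lemma ubf_inl_lt {a b k : ℕ} (j : Fin a) (hj : (j : ℕ) < k / 2) :
    ubf a b k (Sum.inl j) = {⟨2 * j, by omega⟩, ⟨2 * j + 1, by omega⟩} := by
  have : (j : ℕ) < k / 2 ∧ 2 * (j : ℕ) + 1 < k := ⟨hj, by omega⟩
  simp [ubf, this]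

lemma ubf_inl_ge {a b k : ℕ} (hk : 2 ≤ k) (j : Fin a) (hj : ¬ (j : ℕ) < k / 2) :
    ubf a b k (Sum.inl j) = {⟨k - 1, by omega⟩} := by
  simp [ubf, hj, Nat.sub_lt (by omega : 0 < k) one_pos]

lemma ubf_inr_zero {a b k : ℕ} (hk : 2 ≤ k) (j : Fin b) (hj : (j : ℕ) = 0) :
    ubf a b k (Sum.inr j) = {⟨k - 1, by omega⟩} := by
  have : (j : ℕ) = 0 ∧ k - 1 < k := ⟨hj, by omega⟩
  simp [ubf, this]

lemma ubf_inr_pos {a b k : ℕ} (j : Fin b) (hj : (j : ℕ) ≠ 0) :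
    ubf a b k (Sum.inr j) = ∅ := by
  simp [ubf, hj]

lemma ubf_cover {a b k : ℕ} (hk : 2 ≤ k) (h1 : k / 2 < a) (i : Fin k) :
    ∃ j : Fin a, i ∈ ubf a b k (Sum.inl j) := by
  by_cases h : (i : ℕ) < 2 * (k / 2)
  · refine ⟨⟨(i : ℕ) / 2, by omega⟩, ?_⟩
    rw [ubf_inl_lt _ (by simp; omega)]
    simp only [Finset.mem_insert, Finset.mem_singleton, Fin.ext_iff]
    omega
  · refine ⟨⟨k / 2, h1⟩, ?_⟩
    rw [ubf_inl_ge hk _ (by simp)]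
    simp only [Finset.mem_singleton, Fin.ext_iff]
    omega

lemma ubf_card_inl {a b k : ℕ} (hk : 2 ≤ k) (j : Fin a) :
    (ubf a b k (Sum.inl j)).card = if (j : ℕ) < k / 2 then 2 else 1 := by
  by_cases hj : (j : ℕ) < k / 2
  · rw [ubf_inl_lt _ hj, if_pos hj]
    rw [Finset.card_insert_of_notMem (by simp [Fin.ext_iff]), Finset.card_singleton]
  · rw [ubf_inl_ge hk _ hj, if_neg hj, Finset.card_singleton]

lemma sum_ite_lt (c : ℕ) : ∀ n, c ≤ n →
    ∑ x ∈ Finset.range n, (if x < c then 2 else 1) = n + c := by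
  intro n
  induction n with
  | zero => intro h; simp; omega
  | succ m ih =>
    intro h
    rw [Finset.sum_range_succ]
    rcases Nat.lt_or_ge m c with hm | hm
    · have hc : c = m + 1 := by omega
      have : ∀ x ∈ Finset.range m, (if x < c then 2 else 1) = 2 := by
        intro x hx; rw [if_pos]; simp at hx; omega
      rw [Finset.sum_congr rfl this, if_pos hm]
      simp; omega
    · rw [ih (by omega), if_neg (by omega)]
      omega

lemma sum_ite_zero : ∀ n, 1 ≤ n →
    ∑ x ∈ Finset.range n, (if x = 0 then 1 else 0) = 1 := by
  intro n
  induction n with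
  | zero => omega
  | succ m ih =>
    intro _
    rw [Finset.sum_range_succ]
    rcases Nat.eq_zero_or_pos m with hm | hm
    · subst hm; simp
    · rw [ih hm, if_neg (by omega)]

lemma ubf_sum {a b k : ℕ} (hk : 2 ≤ k) (h1 : k / 2 < a) (hb : 1 ≤ b) :
    ∑ v, (ubf a b k v).card = a + (k + 2) / 2 := by
  rw [Fintype.sum_sum_type]
  have hA : ∑ j : Fin a, (ubf a b k (Sum.inl j)).card = a + k / 2 := by
    have : ∀ j : Fin a, (ubf a b k (Sum.inl j)).card = if (j : ℕ) < k / 2 then 2 else 1 :=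
      ubf_card_inl hk
    rw [Finset.sum_congr rfl (fun j _ => this j)]
    exact (Fin.sum_univ_eq_sum_range (fun x => if x < k / 2 then 2 else 1) a).trans
      (sum_ite_lt _ _ (by omega))
  have hB : ∑ j : Fin b, (ubf a b k (Sum.inr j)).card = 1 := by
    have : ∀ j : Fin b, (ubf a b k (Sum.inr j)).card = if (j : ℕ) = 0 then 1 else 0 := by
      intro j
      by_cases hj : (j : ℕ) = 0
      · rw [ubf_inr_zero hk _ hj, if_pos hj, Finset.card_singleton]
      · rw [ubf_inr_pos _ hj, if_neg hj, Finset.card_empty]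
    rw [Finset.sum_congr rfl (fun j _ => this j)]
    exact (Fin.sum_univ_eq_sum_range (fun x => if x = 0 then 1 else 0) b).trans
      (sum_ite_zero _ hb)
  rw [hA, hB]
  omega

lemma ubf_krtdf {a b k : ℕ} (hk : 2 ≤ k) (h1 : k / 2 < a) (hb : 1 ≤ b) :
    IsKRTDF (completeBipartiteGraph (Fin a) (Fin b)) k (ubf a b k) := by
  constructor
  · intro v hv i
    match v with
    | Sum.inl j =>
      exfalso
      by_cases hj : (j : ℕ) < k / 2
      · rw [ubf_inl_lt _ hj] at hv
        simp at hv
      · rw [ubf_inl_ge hk _ hj] at hv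
        simp at hv
    | Sum.inr j =>
      obtain ⟨j', hj'⟩ := ubf_cover (b := b) hk h1 i
      exact ⟨Sum.inl j', by simp, hj'⟩
  · intro v i hv
    match v with
    | Sum.inl j =>
      by_cases hj : (j : ℕ) < k / 2
      · exfalso
        rw [ubf_inl_lt _ hj] at hv
        have h2 : ({⟨2 * (j : ℕ), by omega⟩, ⟨2 * (j : ℕ) + 1, by omega⟩} :
            Finset (Fin k)).card = 2 := by
          rw [Finset.card_insert_of_notMem (by simp [Fin.ext_iff]), Finset.card_singleton]
        rw [hv] at h2
        simp at h2
      · rw [ubf_inl_ge hk _ hj] at hv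
        have : i = ⟨k - 1, by omega⟩ := (Finset.singleton_injective hv).symm
        refine ⟨Sum.inr ⟨0, hb⟩, by simp, ?_⟩
        rw [ubf_inr_zero hk _ rfl, this]
        simp
    | Sum.inr j =>
      by_cases hj : (j : ℕ) = 0
      · rw [ubf_inr_zero hk _ hj] at hv
        have hi : i = ⟨k - 1, by omega⟩ := (Finset.singleton_injective hv).symm
        obtain ⟨j', hj'⟩ := ubf_cover (b := b) hk h1 i
        exact ⟨Sum.inl j', by simp, hj'⟩
      · rw [ubf_inr_pos _ hj] at hv
        exact absurd hv.symm (Finset.singleton_ne_empty i)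


theorem rtdnum_completeBipartite_mid (a b k : ℕ) (ha : 1 ≤ a) (hab : a ≤ b) (hk : 2 ≤ k)
    (h : k < a + b) (h1 : k / 2 < a) (h2 : a < (3 * k - 1) / 2) :
    rtdnum (completeBipartiteGraph (Fin a) (Fin b)) k = a + (k + 2) / 2 := by
  have hb : 1 ≤ b := le_trans ha hab
  have hmem : a + (k + 2) / 2 ∈ {n | ∃ f : (Fin a ⊕ Fin b) → Finset (Fin k),
      IsKRTDF (completeBipartiteGraph (Fin a) (Fin b)) k f ∧ ∑ v, (f v).card = n} :=
    ⟨ubf a b k, ubf_krtdf hk h1 hb, ubf_sum hk h1 hb⟩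
  refine le_antisymm (Nat.sInf_le hmem) (le_csInf ⟨_, hmem⟩ ?_)
  rintro n ⟨f, hf, rfl⟩
  exact lower_bound ha hab hk h1 h2 f hf
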